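/- Consider the open necklace with 12 beads of 2 types given in order by the type sequence (0,0,0,1,1,1,1,0,0,0,0,0) (three green beads, four red beads, five green beads). There do not exist integer cut points 0 = x_0 ≤ x_1 ≤ ⋯ ≤ x_6 ≤ x_7 = 12 such that, assigning piece j (consisting of the beads with indices in [x_j, x_{j+1})) to thief j mod 4 for j = 0,…,6 (distribution order 1,2,3,4,1,2,3), every thief receives exactly 2 beads of type 0 and 1 bead of type 1. -/

import Mathlib

def Cnt (t : Fin 2) (P : ℕ → Prop) [DecidablePred P] : ℕ :=
  (Finset.univ.filter (fun n : Fin 12 =>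
    (![0, 0, 0, 1, 1, 1, 1, 0, 0, 0, 0, 0] : Fin 12 → Fin 2) n = t ∧ P (n : ℕ))).card

def C0' (a d e : ℕ) : Prop :=
  Cnt 0 (fun n => n < a ∨ (d ≤ n ∧ n < e)) = 2 ∧ Cnt 1 (fun n => n < a ∨ (d ≤ n ∧ n < e)) = 1
def C1' (a b e f : ℕ) : Prop :=
  Cnt 0 (fun n => (a ≤ n ∧ n < b) ∨ (e ≤ n ∧ n < f)) = 2 ∧
  Cnt 1 (fun n => (a ≤ n ∧ n < b) ∨ (e ≤ n ∧ n < f)) = 1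
def C2' (b c f : ℕ) : Prop :=
  Cnt 0 (fun n => (b ≤ n ∧ n < c) ∨ f ≤ n) = 2 ∧ Cnt 1 (fun n => (b ≤ n ∧ n < c) ∨ f ≤ n) = 1
def C3' (c d : ℕ) : Prop :=
  Cnt 0 (fun n => c ≤ n ∧ n < d) = 2 ∧ Cnt 1 (fun n => c ≤ n ∧ n < d) = 1

instance (a d e : ℕ) : Decidable (C0' a d e) := by unfold C0' Cnt; infer_instance
instance (a b e f : ℕ) : Decidable (C1' a b e f) := by unfold C1' Cnt; infer_instance
instance (b c f : ℕ) : Decidable (C2' b c f) := by unfold C2' Cnt; infer_instance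
instance (c d : ℕ) : Decidable (C3' c d) := by unfold C3' Cnt; infer_instance

set_option maxHeartbeats 4000000 in
lemma key : ∀ c : Fin 13, ∀ d : Fin 13, C3' c d → ∀ b : Fin 13, (b:ℕ) ≤ c →
    ∀ f : Fin 13, (d:ℕ) ≤ f → C2' b c f → ∀ a : Fin 13, (a:ℕ) ≤ b →
    ∀ e : Fin 13, (d:ℕ) ≤ e → (e:ℕ) ≤ f → C0' a d e → C1' a b e f → False := by
  decide

lemma iff3 (x : Fin 8 → ℕ) (n : ℕ) :
    (∃ j : Fin 7, (j : ℕ) % 4 = ((3 : Fin 4) : ℕ) ∧ x j.castSucc ≤ n ∧ n < x j.succ) ↔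
      (x 3 ≤ n ∧ n < x 4) := by
  constructor
  · rintro ⟨j, hj, h1, h2⟩
    fin_cases j <;> norm_num at hj <;> norm_num at h1 h2 ⊢ <;>
      first | omega | exact ⟨h1, h2⟩
  · rintro ⟨h1, h2⟩
    exact ⟨3, by decide, h1, h2⟩

lemma iff2 (x : Fin 8 → ℕ) (h7 : x 7 = 12) (n : ℕ) (hn : n < 12) :
    (∃ j : Fin 7, (j : ℕ) % 4 = ((2 : Fin 4) : ℕ) ∧ x j.castSucc ≤ n ∧ n < x j.succ) ↔
      ((x 2 ≤ n ∧ n < x 3) ∨ x 6 ≤ n) := by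
  constructor
  · rintro ⟨j, hj, h1, h2⟩
    fin_cases j <;> norm_num at hj <;> norm_num at h1 h2 ⊢ <;>
      first | omega | exact Or.inl ⟨h1, h2⟩ | exact Or.inr h1
  · rintro (⟨h1, h2⟩ | h1)
    · exact ⟨2, by decide, h1, h2⟩
    · refine ⟨6, by decide, h1, ?_⟩
      show n < x 7
      omega

lemma iff1 (x : Fin 8 → ℕ) (n : ℕ) :
    (∃ j : Fin 7, (j : ℕ) % 4 = ((1 : Fin 4) : ℕ) ∧ x j.castSucc ≤ n ∧ n < x j.succ) ↔
      ((x 1 ≤ n ∧ n < x 2) ∨ (x 5 ≤ n ∧ n < x 6)) := by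
  constructor
  · rintro ⟨j, hj, h1, h2⟩
    fin_cases j <;> norm_num at hj <;> norm_num at h1 h2 ⊢ <;>
      first | omega | exact Or.inl ⟨h1, h2⟩ | exact Or.inr ⟨h1, h2⟩
  · rintro (⟨h1, h2⟩ | ⟨h1, h2⟩)
    · exact ⟨1, by decide, h1, h2⟩
    · exact ⟨5, by decide, h1, h2⟩

lemma iff0 (x : Fin 8 → ℕ) (h0 : x 0 = 0) (n : ℕ) :
    (∃ j : Fin 7, (j : ℕ) % 4 = ((0 : Fin 4) : ℕ) ∧ x j.castSucc ≤ n ∧ n < x j.succ) ↔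
      (n < x 1 ∨ (x 4 ≤ n ∧ n < x 5)) := by
  constructor
  · rintro ⟨j, hj, h1, h2⟩
    fin_cases j <;> norm_num at hj <;> norm_num at h1 h2 ⊢ <;>
      first | omega | exact Or.inl h2 | exact Or.inr ⟨h1, h2⟩
  · rintro (h2 | ⟨h1, h2⟩)
    · refine ⟨0, by decide, ?_, h2⟩
      show x 0 ≤ n
      omega
    · exact ⟨4, by decide, h1, h2⟩

theorem stmt3 :
    ¬ ∃ x : Fin 8 → ℕ, Monotone x ∧ x 0 = 0 ∧ x 7 = 12 ∧
      ∀ th : Fin 4,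
        ((Finset.univ.filter (fun n : Fin 12 =>
            (![0, 0, 0, 1, 1, 1, 1, 0, 0, 0, 0, 0] : Fin 12 → Fin 2) n = 0 ∧
            ∃ j : Fin 7, (j : ℕ) % 4 = (th : ℕ) ∧
              x j.castSucc ≤ (n : ℕ) ∧ (n : ℕ) < x j.succ)).card = 2 ∧
         (Finset.univ.filter (fun n : Fin 12 =>
            (![0, 0, 0, 1, 1, 1, 1, 0, 0, 0, 0, 0] : Fin 12 → Fin 2) n = 1 ∧
            ∃ j : Fin 7, (j : ℕ) % 4 = (th : ℕ) ∧
              x j.castSucc ≤ (n : ℕ) ∧ (n : ℕ) < x j.succ)).card = 1) := by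
  rintro ⟨x, hmono, h0, h7, h⟩
  have hb : ∀ i : Fin 8, x i ≤ 12 := by
    intro i
    have := hmono (Fin.le_last i)
    rwa [show Fin.last 7 = (7 : Fin 8) from rfl, h7] at this
  have hc3 : C3' (x 3) (x 4) := by
    have E : ∀ t : Fin 2,
        (Finset.univ.filter (fun n : Fin 12 =>
          (![0, 0, 0, 1, 1, 1, 1, 0, 0, 0, 0, 0] : Fin 12 → Fin 2) n = t ∧
          ∃ j : Fin 7, (j : ℕ) % 4 = (((3 : Fin 4)) : ℕ) ∧
            x j.castSucc ≤ (n : ℕ) ∧ (n : ℕ) < x j.succ)) =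
        (Finset.univ.filter (fun n : Fin 12 =>
          (![0, 0, 0, 1, 1, 1, 1, 0, 0, 0, 0, 0] : Fin 12 → Fin 2) n = t ∧
          (x 3 ≤ (n : ℕ) ∧ (n : ℕ) < x 4))) :=
      fun t => Finset.filter_congr (fun n _ => and_congr_right (fun _ => iff3 x n))
    constructor
    · show (Finset.univ.filter (fun n : Fin 12 =>
          (![0, 0, 0, 1, 1, 1, 1, 0, 0, 0, 0, 0] : Fin 12 → Fin 2) n = 0 ∧
          (x 3 ≤ (n : ℕ) ∧ (n : ℕ) < x 4))).card = 2
      rw [← E 0]; exact (h 3).1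
    · show (Finset.univ.filter (fun n : Fin 12 =>
          (![0, 0, 0, 1, 1, 1, 1, 0, 0, 0, 0, 0] : Fin 12 → Fin 2) n = 1 ∧
          (x 3 ≤ (n : ℕ) ∧ (n : ℕ) < x 4))).card = 1
      rw [← E 1]; exact (h 3).2
  have hc2 : C2' (x 2) (x 3) (x 6) := by
    have E : ∀ t : Fin 2,
        (Finset.univ.filter (fun n : Fin 12 =>
          (![0, 0, 0, 1, 1, 1, 1, 0, 0, 0, 0, 0] : Fin 12 → Fin 2) n = t ∧
          ∃ j : Fin 7, (j : ℕ) % 4 = (((2 : Fin 4)) : ℕ) ∧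
            x j.castSucc ≤ (n : ℕ) ∧ (n : ℕ) < x j.succ)) =
        (Finset.univ.filter (fun n : Fin 12 =>
          (![0, 0, 0, 1, 1, 1, 1, 0, 0, 0, 0, 0] : Fin 12 → Fin 2) n = t ∧
          ((x 2 ≤ (n : ℕ) ∧ (n : ℕ) < x 3) ∨ x 6 ≤ (n : ℕ)))) :=
      fun t => Finset.filter_congr (fun n _ =>
        and_congr_right (fun _ => iff2 x h7 n n.isLt))
    constructor
    · show (Finset.univ.filter (fun n : Fin 12 =>
          (![0, 0, 0, 1, 1, 1, 1, 0, 0, 0, 0, 0] : Fin 12 → Fin 2) n = 0 ∧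
          ((x 2 ≤ (n : ℕ) ∧ (n : ℕ) < x 3) ∨ x 6 ≤ (n : ℕ)))).card = 2
      rw [← E 0]; exact (h 2).1
    · show (Finset.univ.filter (fun n : Fin 12 =>
          (![0, 0, 0, 1, 1, 1, 1, 0, 0, 0, 0, 0] : Fin 12 → Fin 2) n = 1 ∧
          ((x 2 ≤ (n : ℕ) ∧ (n : ℕ) < x 3) ∨ x 6 ≤ (n : ℕ)))).card = 1
      rw [← E 1]; exact (h 2).2
  have hc1 : C1' (x 1) (x 2) (x 5) (x 6) := by
    have E : ∀ t : Fin 2,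
        (Finset.univ.filter (fun n : Fin 12 =>
          (![0, 0, 0, 1, 1, 1, 1, 0, 0, 0, 0, 0] : Fin 12 → Fin 2) n = t ∧
          ∃ j : Fin 7, (j : ℕ) % 4 = (((1 : Fin 4)) : ℕ) ∧
            x j.castSucc ≤ (n : ℕ) ∧ (n : ℕ) < x j.succ)) =
        (Finset.univ.filter (fun n : Fin 12 =>
          (![0, 0, 0, 1, 1, 1, 1, 0, 0, 0, 0, 0] : Fin 12 → Fin 2) n = t ∧
          ((x 1 ≤ (n : ℕ) ∧ (n : ℕ) < x 2) ∨ (x 5 ≤ (n : ℕ) ∧ (n : ℕ) < x 6)))) :=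
      fun t => Finset.filter_congr (fun n _ => and_congr_right (fun _ => iff1 x n))
    constructor
    · show (Finset.univ.filter (fun n : Fin 12 =>
          (![0, 0, 0, 1, 1, 1, 1, 0, 0, 0, 0, 0] : Fin 12 → Fin 2) n = 0 ∧
          ((x 1 ≤ (n : ℕ) ∧ (n : ℕ) < x 2) ∨ (x 5 ≤ (n : ℕ) ∧ (n : ℕ) < x 6)))).card = 2
      rw [← E 0]; exact (h 1).1
    · show (Finset.univ.filter (fun n : Fin 12 =>
          (![0, 0, 0, 1, 1, 1, 1, 0, 0, 0, 0, 0] : Fin 12 → Fin 2) n = 1 ∧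
          ((x 1 ≤ (n : ℕ) ∧ (n : ℕ) < x 2) ∨ (x 5 ≤ (n : ℕ) ∧ (n : ℕ) < x 6)))).card = 1
      rw [← E 1]; exact (h 1).2
  have hc0 : C0' (x 1) (x 4) (x 5) := by
    have E : ∀ t : Fin 2,
        (Finset.univ.filter (fun n : Fin 12 =>
          (![0, 0, 0, 1, 1, 1, 1, 0, 0, 0, 0, 0] : Fin 12 → Fin 2) n = t ∧
          ∃ j : Fin 7, (j : ℕ) % 4 = (((0 : Fin 4)) : ℕ) ∧
            x j.castSucc ≤ (n : ℕ) ∧ (n : ℕ) < x j.succ)) =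
        (Finset.univ.filter (fun n : Fin 12 =>
          (![0, 0, 0, 1, 1, 1, 1, 0, 0, 0, 0, 0] : Fin 12 → Fin 2) n = t ∧
          ((n : ℕ) < x 1 ∨ (x 4 ≤ (n : ℕ) ∧ (n : ℕ) < x 5)))) :=
      fun t => Finset.filter_congr (fun n _ => and_congr_right (fun _ => iff0 x h0 n))
    constructor
    · show (Finset.univ.filter (fun n : Fin 12 =>
          (![0, 0, 0, 1, 1, 1, 1, 0, 0, 0, 0, 0] : Fin 12 → Fin 2) n = 0 ∧
          ((n : ℕ) < x 1 ∨ (x 4 ≤ (n : ℕ) ∧ (n : ℕ) < x 5)))).card = 2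
      rw [← E 0]; exact (h 0).1
    · show (Finset.univ.filter (fun n : Fin 12 =>
          (![0, 0, 0, 1, 1, 1, 1, 0, 0, 0, 0, 0] : Fin 12 → Fin 2) n = 1 ∧
          ((n : ℕ) < x 1 ∨ (x 4 ≤ (n : ℕ) ∧ (n : ℕ) < x 5)))).card = 1
      rw [← E 1]; exact (h 0).2
  have m : ∀ i j : Fin 8, i ≤ j → x i ≤ x j := fun i j hij => hmono hij
  exact key ⟨x 3, by have := hb 3; omega⟩ ⟨x 4, by have := hb 4; omega⟩ hc3
    ⟨x 2, by have := hb 2; omega⟩ (m 2 3 (by decide))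
    ⟨x 6, by have := hb 6; omega⟩ (m 4 6 (by decide)) hc2
    ⟨x 1, by have := hb 1; omega⟩ (m 1 2 (by decide))
    ⟨x 5, by have := hb 5; omega⟩ (m 4 5 (by decide)) (m 5 6 (by decide)) hc0 hc1
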